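/- arXiv:1701.02180 — 2 statements merged into one kernel-verified Lean document; each statement's English description precedes it below -/
import Mathlib

section
/- Let A be a unital C*-algebra in which every element admits a unitary polar decomposition, i.e., for every x ∈ A there exists a unitary u ∈ A with x = u · √(x*x), where √ denotes the continuous-functional-calculus square root of the positive element x*x. Then the invertible elements of A are dense in A (A has stable rank one). -/
/-- If every element of a unital C*-algebra `A` admits a unitary polar decomposition
`x = u * √(x*x)` (with `√` the continuous-functional-calculus square root of `x*x`),
then the invertible elements are dense in `A` (stable rank one). -/
theorem dense_isUnit_of_unitary_polar_decomposition {A : Type*} [CStarAlgebra A]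
    (h : ∀ x : A, ∃ u ∈ unitary A, x = u * cfc Real.sqrt (star x * x)) :
    Dense {x : A | IsUnit x} := by
  rcases subsingleton_or_nontrivial A with hA | hA
  · exact fun x => subset_closure (isUnit_of_subsingleton x)
  let _ := CStarAlgebra.spectralOrder A
  have _inst := CStarAlgebra.spectralOrderedRing A
  rw [Metric.dense_iff]
  intro x ε hε
  obtain ⟨u, hu, hx⟩ := h x
  set a : A := cfc Real.sqrt (star x * x) with ha_def
  have ha : 0 ≤ a := cfc_nonneg fun t _ => Real.sqrt_nonneg t
  set c : ℝ := ε / 2 with hc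
  have hcpos : 0 < c := by positivity
  have hcu : IsUnit ((c : ℝ) • (1 : A)) := by
    rw [← Algebra.algebraMap_eq_smul_one]
    exact (isUnit_iff_ne_zero.mpr hcpos.ne').map (algebraMap ℝ A)
  have hcnn : (0 : A) ≤ c • 1 := smul_nonneg hcpos.le zero_le_one
  have hle : c • (1 : A) ≤ a + c • 1 := le_add_of_nonneg_left ha
  have hunit : IsUnit (a + c • 1) := CStarAlgebra.isUnit_of_le _ hle ⟨hcnn, hcu⟩
  refine ⟨u * (a + c • 1), ?_, ?_⟩
  · rw [Metric.mem_ball, dist_eq_norm, hx]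
    have : u * (a + c • 1) - u * a = c • u := by
      rw [mul_add]; simp [mul_smul_comm]
    rw [this, norm_smul]
    have hu1 : ‖u‖ = 1 := CStarRing.norm_of_mem_unitary hu
    rw [hu1]
    simp only [Real.norm_eq_abs, abs_of_pos hcpos, mul_one]
    linarith
  · exact ((Unitary.toUnits ⟨u, hu⟩).isUnit).mul hunit
end

section
/- Let A and B be unital C*-algebras and π : A → B a surjective unital *-homomorphism. If u is a unitary element of B that is joined to the unit 1 by a continuous path inside the unitary group of B, then there exists a unitary v ∈ A such that π(v) = u. -/
open Complex NormedSpace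
open scoped CStarAlgebra Pointwise

section UnitaryLiftAux

variable {A B : Type*} [CStarAlgebra A] [CStarAlgebra B]

/-- A unitary within distance `2` of `1` is an exponential of `I` times a selfadjoint. -/
lemma exp_of_norm_lt_two' {w : B} (hw : w ∈ unitary B) (hnorm : ‖w - 1‖ < 2) :
    ∃ h : B, IsSelfAdjoint h ∧ exp (I • h) = w := by
  rcases subsingleton_or_nontrivial B with hB | hB
  · exact ⟨0, by rw [isSelfAdjoint_iff]; exact Subsingleton.elim _ _, Subsingleton.elim _ _⟩
  have hn : IsStarNormal w := Unitary.coe_isStarNormal (⟨w, hw⟩ : unitary B)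
  have hspec : ∀ z ∈ spectrum ℂ w, ‖z‖ = 1 := by
    intro z hz
    simpa using spectrum.subset_circle_of_unitary hw hz
  have hne : (-1 : ℂ) ∉ spectrum ℂ w := by
    intro hmem
    have h2 : (-1 : ℂ) - 1 ∈ spectrum ℂ w - ({1} : Set ℂ) :=
      Set.sub_mem_sub hmem rfl
    rw [spectrum.sub_singleton_eq] at h2
    have hle := spectrum.norm_le_norm_of_mem h2
    rw [map_one] at hle
    norm_num at hle
    linarith
  have hslit : ∀ z ∈ spectrum ℂ w, z ∈ Complex.slitPlane := by
    intro z hz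
    rw [Complex.mem_slitPlane_iff]
    by_contra hcon
    push_neg at hcon
    obtain ⟨hre, him⟩ := hcon
    have habs : ‖z‖ = 1 := by
      exact hspec z hz
    have hsq : z.re * z.re + z.im * z.im = 1 := by
      have := Complex.sq_norm z
      rw [habs, Complex.normSq_apply] at this
      linarith [this]
    have hrev : z.re = -1 := by nlinarith
    exact hne (by rw [show z = -1 from Complex.ext (by simp [hrev]) (by simp [him])] at hz; exact hz)
  set f : ℂ → ℂ := fun z => (Complex.arg z : ℂ) with hf
  have hcont : ContinuousOn f (spectrum ℂ w) := fun z hz =>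
    (Complex.continuous_ofReal.continuousAt.comp
      (Complex.continuousAt_arg (hslit z hz))).continuousWithinAt
  refine ⟨cfc f w, ?_, ?_⟩
  · rw [isSelfAdjoint_iff, ← cfc_star]
    exact cfc_congr fun z _ => by simp [hf, Complex.conj_ofReal]
  · have hg : ContinuousOn (fun z : ℂ => I * f z) (spectrum ℂ w) :=
      continuousOn_const.mul hcont
    rw [← cfc_const_mul I f w hcont]
    have hnormal2 : IsStarNormal (cfc (fun z => I * f z) w) := cfc_predicate _ w
    rw [← CFC.complex_exp_eq_normedSpace_exp,
      ← cfc_comp' Complex.exp (fun z => I * f z) w (Complex.continuous_exp.continuousOn) hg]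
    conv_rhs => rw [← cfc_id ℂ w]
    apply cfc_congr
    intro z hz
    have habs : ‖z‖ = 1 := by
      exact hspec z hz
    have := Complex.norm_mul_exp_arg_mul_I z
    rw [habs, Complex.ofReal_one, one_mul] at this
    simpa [hf, mul_comm] using this

/-- Selfadjoint elements lift to selfadjoint elements along surjective star homomorphisms. -/
lemma lift_isSelfAdjoint' (π : A →⋆ₐ[ℂ] B) (hsurj : Function.Surjective π) {h : B}
    (hh : IsSelfAdjoint h) : ∃ a : A, IsSelfAdjoint a ∧ π a = h := by
  obtain ⟨x, hx⟩ := hsurj h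
  refine ⟨(2 : ℂ)⁻¹ • (x + star x), ?_, ?_⟩
  · refine IsSelfAdjoint.smul ?_ ?_
    · rw [isSelfAdjoint_iff, star_inv₀]
      simp
    · rw [isSelfAdjoint_iff]
      simp [add_comm]
  · rw [map_smul, map_add, map_star, hx, hh.star_eq, ← two_smul ℂ h, smul_smul]
    norm_num

/-- Unitaries close to `1` lift along surjective star homomorphisms. -/
lemma lift_of_norm_lt_two' (π : A →⋆ₐ[ℂ] B) (hsurj : Function.Surjective π) {w : B}
    (hw : w ∈ unitary B) (hnorm : ‖w - 1‖ < 2) :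
    ∃ v ∈ unitary A, π v = w := by
  obtain ⟨h, hh, hexp⟩ := exp_of_norm_lt_two' hw hnorm
  obtain ⟨a, ha, hπa⟩ := lift_isSelfAdjoint' π hsurj hh
  let +nondep : NormedAlgebra ℚ A := .restrictScalars ℚ ℂ A
  let +nondep : NormedAlgebra ℚ B := .restrictScalars ℚ ℂ B
  refine ⟨exp (I • a),
    exp_mem_unitary_of_mem_skewAdjoint (ha.smul_mem_skewAdjoint Complex.conj_I), ?_⟩
  have hcont : Continuous π := map_continuous π
  rw [map_exp π hcont, map_smul, hπa, hexp]

end UnitaryLiftAux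

/-- If `π : A → B` is a surjective unital *-homomorphism between unital C*-algebras and
`u` is a unitary of `B` joined to `1` by a continuous path inside the unitary group of `B`,
then `u` lifts to a unitary of `A`. -/
theorem unitary_lifts_along_surjection {A B : Type*} [CStarAlgebra A] [CStarAlgebra B]
    (π : A →⋆ₐ[ℂ] B) (hsurj : Function.Surjective π)
    (u : B) (hu : u ∈ unitary B) (hpath : JoinedIn ((unitary B : Set B)) 1 u) :
    ∃ v ∈ unitary A, π v = u := by
  classical
  let S : Subgroup (unitary B) :=
    { carrier := {w : unitary B | ∃ v ∈ unitary A, π v = (w : B)}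
      one_mem' := ⟨1, one_mem _, by simp⟩
      mul_mem' := by
        rintro w₁ w₂ ⟨v₁, hv₁, h₁⟩ ⟨v₂, hv₂, h₂⟩
        exact ⟨v₁ * v₂, mul_mem hv₁ hv₂, by simp [h₁, h₂]⟩
      inv_mem' := by
        rintro w ⟨v, hv, hvw⟩
        refine ⟨star v, Unitary.star_mem hv, ?_⟩
        rw [map_star, hvw]
        rfl }
  have hball : Metric.ball (1 : unitary B) 2 ⊆ (S : Set (unitary B)) := by
    intro w hwball
    have hd : ‖(w : B) - 1‖ < 2 := by
      have := Metric.mem_ball.mp hwball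
      rwa [Subtype.dist_eq, dist_eq_norm] at this
    exact lift_of_norm_lt_two' π hsurj w.2 hd
  have hopen : IsOpen (S : Set (unitary B)) :=
    S.isOpen_of_mem_nhds (g := 1)
      (Filter.mem_of_superset (Metric.ball_mem_nhds _ two_pos) hball)
  have hclopen : IsClopen (S : Set (unitary B)) := ⟨S.isClosed_of_isOpen hopen, hopen⟩
  have hj : Joined (⟨1, one_mem _⟩ : unitary B) ⟨u, hu⟩ := hpath.joined_subtype
  have hmem : (⟨u, hu⟩ : unitary B) ∈ S :=
    hclopen.connectedComponent_subset S.one_mem (pathComponent_subset_component _ hj)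
  obtain ⟨v, hv, hπv⟩ := hmem
  exact ⟨v, hv, hπv⟩
end
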